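/- Let M ≥ 2 be an integer, q > 0 and c ≥ 0 real numbers. For each integer i ≥ 1 define the slice sum S_i = Σ_{r₁ = M^{i−1}}^{M^i} Σ_{r₂ = M^{i−1}}^{M^i} 1/(q·(r₁ + r₂) + c)², the sums being over integers r₁, r₂. Then there exists a constant C > 0 such that for all i ≥ 1, |S_i − κ/q²| ≤ C·M^{−i}, where κ := ln((M + 1)²/(4M)). In particular κ is independent of the slice index i and of c, and S_i → κ/q² as i → ∞. -/

import Mathlib

open scoped BigOperators

open Finset


open Finset

lemma gw_Icc_range (m n : ℕ) (f : ℕ → ℝ) :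
    ∑ i ∈ Finset.Icc m (m+n), f i = ∑ i ∈ Finset.range (n+1), f (m+i) := by
  rw [← Finset.Ico_add_one_right_eq_Icc, Finset.sum_Ico_eq_sum_range,
    show m + n + 1 - m = n + 1 from by omega]

lemma gw_sum_le (φ Ψ : ℕ → ℝ) (a n : ℕ) (h : ∀ j, a ≤ j → φ (j+1) ≤ Ψ j - Ψ (j+1)) :
    ∑ r ∈ Finset.Icc a (a+n), φ r ≤ φ a + (Ψ a - Ψ (a+n)) := by
  rw [gw_Icc_range, Finset.sum_range_succ']
  have h3 : ∑ j ∈ Finset.range n, (Ψ (a+j) - Ψ (a+(j+1))) = Ψ a - Ψ (a+n) := by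
    simpa using Finset.sum_range_sub' (fun j => Ψ (a+j)) n
  have h2 : ∑ j ∈ Finset.range n, φ (a+(j+1)) ≤ ∑ j ∈ Finset.range n, (Ψ (a+j) - Ψ (a+(j+1))) := by
    apply Finset.sum_le_sum
    intro j _
    have := h (a+j) (Nat.le_add_right _ _)
    have e : a + j + 1 = a + (j+1) := by omega
    rw [e] at this; exact this
  have : φ (a + 0) = φ a := by norm_num
  linarith [h2, h3.symm ▸ h2]

lemma gw_le_sum (φ Ψ : ℕ → ℝ) (a n : ℕ) (h : ∀ j, a ≤ j → Ψ j - Ψ (j+1) ≤ φ j) :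
    Ψ a - Ψ (a+(n+1)) ≤ ∑ r ∈ Finset.Icc a (a+n), φ r := by
  rw [gw_Icc_range]
  have h3 : ∑ j ∈ Finset.range (n+1), (Ψ (a+j) - Ψ (a+(j+1))) = Ψ a - Ψ (a+(n+1)) := by
    simpa using Finset.sum_range_sub' (fun j => Ψ (a+j)) (n+1)
  rw [← h3]
  apply Finset.sum_le_sum
  intro j _
  have := h (a+j) (Nat.le_add_right _ _)
  have e : a + j + 1 = a + (j+1) := by omega
  rw [e] at this; exact this

noncomputable def gwg (q c : ℝ) (m : ℕ) : ℝ := 1 / (q * (m:ℝ) + c) ^ 2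
noncomputable def gwF (q c : ℝ) (m : ℕ) : ℝ := 1 / (q * (q * (m:ℝ) + c))
noncomputable def gwP (q c : ℝ) (m : ℕ) : ℝ := Real.log (q * (m:ℝ) + c) / q ^ 2
noncomputable def gwP0 (q : ℝ) (m : ℕ) : ℝ := Real.log (q * (m:ℝ)) / q ^ 2

section
variable {q c : ℝ} (hq : 0 < q) (hc : 0 ≤ c)
include hq hc

lemma gw_L1a (m : ℕ) (hm : 1 ≤ m) : gwg q c (m+1) ≤ gwF q c m - gwF q c (m+1) := by
  simp only [gwg, gwF]; push_cast
  have hm1 : (1:ℝ) ≤ (m:ℝ) := by exact_mod_cast hm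
  have hA : 0 < q * (m:ℝ) + c := by nlinarith
  have hB : 0 < q * ((m:ℝ)+1) + c := by nlinarith
  have key : 1/(q*(q*(m:ℝ)+c)) - 1/(q*(q*((m:ℝ)+1)+c))
      = 1/((q*(m:ℝ)+c)*(q*((m:ℝ)+1)+c)) := by
    field_simp; ring
  rw [key]
  apply one_div_le_one_div_of_le (mul_pos hA hB)
  nlinarith

lemma gw_L1b (m : ℕ) (hm : 1 ≤ m) : gwF q c m - gwF q c (m+1) ≤ gwg q c m := by
  simp only [gwg, gwF]; push_cast
  have hm1 : (1:ℝ) ≤ (m:ℝ) := by exact_mod_cast hm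
  have hA : 0 < q * (m:ℝ) + c := by nlinarith
  have hB : 0 < q * ((m:ℝ)+1) + c := by nlinarith
  have key : 1/(q*(q*(m:ℝ)+c)) - 1/(q*(q*((m:ℝ)+1)+c))
      = 1/((q*(m:ℝ)+c)*(q*((m:ℝ)+1)+c)) := by
    field_simp; ring
  rw [key]
  apply one_div_le_one_div_of_le (by positivity)
  nlinarith

lemma gw_L2a (m : ℕ) (hm : 1 ≤ m) : gwF q c (m+1) ≤ gwP q c (m+1) - gwP q c m := by
  simp only [gwF, gwP]; push_cast
  have hm1 : (1:ℝ) ≤ (m:ℝ) := by exact_mod_cast hm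
  have hA : 0 < q * (m:ℝ) + c := by nlinarith
  have hB : 0 < q * ((m:ℝ)+1) + c := by nlinarith
  have hlog : q/(q*((m:ℝ)+1)+c) ≤ Real.log (q*((m:ℝ)+1)+c) - Real.log (q*(m:ℝ)+c) := by
    have h := Real.log_le_sub_one_of_pos (show 0 < (q*(m:ℝ)+c)/(q*((m:ℝ)+1)+c) by positivity)
    rw [Real.log_div hA.ne' hB.ne'] at h
    have e : (q*(m:ℝ)+c)/(q*((m:ℝ)+1)+c) - 1 = -(q/(q*((m:ℝ)+1)+c)) := by
      field_simp; ring
    linarith [e ▸ h]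
  have e2 : q/(q*((m:ℝ)+1)+c)/q^2 = 1/(q*(q*((m:ℝ)+1)+c)) := by
    field_simp
  calc 1/(q*(q*((m:ℝ)+1)+c)) = q/(q*((m:ℝ)+1)+c)/q^2 := e2.symm
    _ ≤ (Real.log (q*((m:ℝ)+1)+c) - Real.log (q*(m:ℝ)+c))/q^2 := by
        exact div_le_div_of_nonneg_right hlog (by positivity)
    _ = Real.log (q*((m:ℝ)+1)+c)/q^2 - Real.log (q*(m:ℝ)+c)/q^2 := by ring

lemma gw_L2b (m : ℕ) (hm : 1 ≤ m) : gwP q c (m+1) - gwP q c m ≤ gwF q c m := by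
  simp only [gwF, gwP]; push_cast
  have hm1 : (1:ℝ) ≤ (m:ℝ) := by exact_mod_cast hm
  have hA : 0 < q * (m:ℝ) + c := by nlinarith
  have hB : 0 < q * ((m:ℝ)+1) + c := by nlinarith
  have hlog : Real.log (q*((m:ℝ)+1)+c) - Real.log (q*(m:ℝ)+c) ≤ q/(q*(m:ℝ)+c) := by
    have h := Real.log_le_sub_one_of_pos (show 0 < (q*((m:ℝ)+1)+c)/(q*(m:ℝ)+c) by positivity)
    rw [Real.log_div hB.ne' hA.ne'] at h
    have e : (q*((m:ℝ)+1)+c)/(q*(m:ℝ)+c) - 1 = q/(q*(m:ℝ)+c) := by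
      field_simp; ring
    linarith [e ▸ h]
  have e2 : q/(q*(m:ℝ)+c)/q^2 = 1/(q*(q*(m:ℝ)+c)) := by
    field_simp
  calc Real.log (q*((m:ℝ)+1)+c)/q^2 - Real.log (q*(m:ℝ)+c)/q^2
      = (Real.log (q*((m:ℝ)+1)+c) - Real.log (q*(m:ℝ)+c))/q^2 := by ring
    _ ≤ q/(q*(m:ℝ)+c)/q^2 := div_le_div_of_nonneg_right hlog (by positivity)
    _ = 1/(q*(q*(m:ℝ)+c)) := e2

lemma gw_L3a (m d : ℕ) (hm : 1 ≤ m) : gwP0 q m ≤ gwP q c (m+d) := by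
  simp only [gwP0, gwP]; push_cast
  have hm1 : (1:ℝ) ≤ (m:ℝ) := by exact_mod_cast hm
  have hd0 : (0:ℝ) ≤ (d:ℝ) := Nat.cast_nonneg d
  apply div_le_div_of_nonneg_right ?_ (by positivity)
  apply Real.log_le_log (by nlinarith)
  nlinarith

lemma gw_L3b (m d : ℕ) (hm : 1 ≤ m) :
    gwP q c (m+d) - gwP0 q m ≤ (q*(d:ℝ)+c)/(q^3*(m:ℝ)) := by
  simp only [gwP0, gwP]; push_cast
  have hm1 : (1:ℝ) ≤ (m:ℝ) := by exact_mod_cast hm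
  have hd0 : (0:ℝ) ≤ (d:ℝ) := Nat.cast_nonneg d
  have hY : 0 < q * (m:ℝ) := by nlinarith
  have hX : 0 < q * ((m:ℝ)+(d:ℝ)) + c := by nlinarith
  have hlog : Real.log (q*((m:ℝ)+(d:ℝ))+c) - Real.log (q*(m:ℝ)) ≤ (q*(d:ℝ)+c)/(q*(m:ℝ)) := by
    have h := Real.log_le_sub_one_of_pos (show 0 < (q*((m:ℝ)+(d:ℝ))+c)/(q*(m:ℝ)) by positivity)
    rw [Real.log_div hX.ne' hY.ne'] at h
    have e : (q*((m:ℝ)+(d:ℝ))+c)/(q*(m:ℝ)) - 1 = (q*(d:ℝ)+c)/(q*(m:ℝ)) := by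
      field_simp; ring
    linarith [e ▸ h]
  have e2 : (q*(d:ℝ)+c)/(q*(m:ℝ))/q^2 = (q*(d:ℝ)+c)/(q^3*(m:ℝ)) := by
    rw [div_div, div_eq_div_iff (by positivity) (by positivity)]; ring
  calc Real.log (q*((m:ℝ)+(d:ℝ))+c)/q^2 - Real.log (q*(m:ℝ))/q^2
      = (Real.log (q*((m:ℝ)+(d:ℝ))+c) - Real.log (q*(m:ℝ)))/q^2 := by ring
    _ ≤ (q*(d:ℝ)+c)/(q*(m:ℝ))/q^2 := div_le_div_of_nonneg_right hlog (by positivity)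
    _ = (q*(d:ℝ)+c)/(q^3*(m:ℝ)) := e2

lemma gw_Fnonneg (m : ℕ) : 0 ≤ gwF q c m := by
  simp only [gwF]
  apply div_nonneg zero_le_one
  have h0 : (0:ℝ) ≤ (m:ℝ) := Nat.cast_nonneg m
  nlinarith [mul_nonneg (mul_nonneg hq.le hq.le) h0, mul_nonneg hq.le hc]

omit hq hc in
lemma gw_gnonneg (m : ℕ) : 0 ≤ gwg q c m := by
  simp only [gwg]; positivity

end

set_option maxHeartbeats 2000000 in
lemma gw_key (M : ℕ) (hM : 2 ≤ M) (q c : ℝ) (hq : 0 < q) (hc : 0 ≤ c) (i : ℕ) (hi : 1 ≤ i) :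
    |(∑ r₁ ∈ Finset.Icc (M ^ (i - 1)) (M ^ i), ∑ r₂ ∈ Finset.Icc (M ^ (i - 1)) (M ^ i),
          (1 : ℝ) / (q * ((r₁ : ℝ) + (r₂ : ℝ)) + c) ^ 2)
        - Real.log (((M : ℝ) + 1) ^ 2 / (4 * (M : ℝ))) / q ^ 2|
      ≤ ((2*(q+c)/q^3 + 2/q^2) * (M:ℝ)) / (M : ℝ) ^ i := by
  set a := M ^ (i - 1) with ha
  have ha1 : 1 ≤ a := Nat.one_le_pow _ _ (by omega)
  have hab : a ≤ M ^ i := Nat.pow_le_pow_right (by omega) (by omega)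
  set n := M ^ i - a with hn
  have hbn : M ^ i = a + n := by omega
  rw [hbn]
  have hrw : (∑ r₁ ∈ Finset.Icc a (a+n), ∑ r₂ ∈ Finset.Icc a (a+n),
        (1 : ℝ) / (q * ((r₁ : ℝ) + (r₂ : ℝ)) + c) ^ 2)
      = ∑ r₁ ∈ Finset.Icc a (a+n), ∑ r₂ ∈ Finset.Icc a (a+n), gwg q c (r₁+r₂) := by
    apply Finset.sum_congr rfl; intro r₁ _
    apply Finset.sum_congr rfl; intro r₂ _
    simp only [gwg]; push_cast; ring
  rw [hrw]
  -- cast facts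
  have hM2 : (2:ℝ) ≤ (M:ℝ) := by exact_mod_cast hM
  have hM0 : (0:ℝ) < (M:ℝ) := by linarith
  have hx1 : (1:ℝ) ≤ (a:ℝ) := by exact_mod_cast ha1
  have hx0 : (0:ℝ) < (a:ℝ) := by linarith
  have hn0 : (0:ℝ) ≤ (n:ℝ) := Nat.cast_nonneg n
  have hMi : (M:ℝ)^i = (M:ℝ) * (a:ℝ) := by
    rw [ha]; push_cast
    rw [← pow_succ']
    congr 1; omega
  have hxy : (a:ℝ) + (n:ℝ) = (M:ℝ) * (a:ℝ) := by
    have h := congrArg (fun k : ℕ => (k:ℝ)) hbn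
    push_cast at h
    rw [hMi] at h
    linarith
  -- inner sandwich
  have inner_lb : ∀ r₁ ∈ Finset.Icc a (a+n),
      gwF q c (r₁+a) - gwF q c (r₁+(a+(n+1))) ≤ ∑ r₂ ∈ Finset.Icc a (a+n), gwg q c (r₁+r₂) := by
    intro r₁ _
    refine gw_le_sum _ (fun r => gwF q c (r₁+r)) a n (fun j hj => ?_)
    have h := gw_L1b hq hc (r₁+j) (by omega)
    have e : r₁ + (j+1) = r₁ + j + 1 := by omega
    simpa [e] using h
  have inner_ub : ∀ r₁ ∈ Finset.Icc a (a+n),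
      (∑ r₂ ∈ Finset.Icc a (a+n), gwg q c (r₁+r₂))
        ≤ gwg q c (r₁+a) + (gwF q c (r₁+a) - gwF q c (r₁+(a+n))) := by
    intro r₁ _
    refine gw_sum_le _ (fun r => gwF q c (r₁+r)) a n (fun j hj => ?_)
    have h := gw_L1a hq hc (r₁+j) (by omega)
    have e : r₁ + (j+1) = r₁ + j + 1 := by omega
    simpa [e] using h
  have hL1 := Finset.sum_le_sum inner_lb
  have hU1 := Finset.sum_le_sum inner_ub
  rw [Finset.sum_sub_distrib] at hL1
  rw [Finset.sum_add_distrib, Finset.sum_sub_distrib] at hU1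
  -- outer telescopes
  have O1 : -gwP q c (a+a) - -gwP q c (a+(n+1)+a)
      ≤ ∑ r ∈ Finset.Icc a (a+n), gwF q c (r+a) := by
    refine gw_le_sum _ (fun r => -gwP q c (r+a)) a n (fun j hj => ?_)
    have h := gw_L2b hq hc (j+a) (by omega)
    have e : j + 1 + a = j + a + 1 := by omega
    simp only [e]
    linarith [h]
  have O2 : (∑ r ∈ Finset.Icc a (a+n), gwF q c (r+(a+(n+1))))
      ≤ gwF q c (a+(a+(n+1))) + (-gwP q c (a+(a+(n+1))) - -gwP q c (a+n+(a+(n+1)))) := by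
    refine gw_sum_le _ (fun r => -gwP q c (r+(a+(n+1)))) a n (fun j hj => ?_)
    have h := gw_L2a hq hc (j+(a+(n+1))) (by omega)
    have e : j + 1 + (a+(n+1)) = j + (a+(n+1)) + 1 := by omega
    simp only [e]
    linarith [h]
  have O3 : (∑ r ∈ Finset.Icc a (a+n), gwg q c (r+a))
      ≤ gwg q c (a+a) + (gwF q c (a+a) - gwF q c (a+n+a)) := by
    refine gw_sum_le _ (fun r => gwF q c (r+a)) a n (fun j hj => ?_)
    have h := gw_L1a hq hc (j+a) (by omega)
    have e : j + 1 + a = j + a + 1 := by omega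
    simp only [e]
    linarith [h]
  have O4 : (∑ r ∈ Finset.Icc a (a+n), gwF q c (r+a))
      ≤ gwF q c (a+a) + (-gwP q c (a+a) - -gwP q c (a+n+a)) := by
    refine gw_sum_le _ (fun r => -gwP q c (r+a)) a n (fun j hj => ?_)
    have h := gw_L2a hq hc (j+a) (by omega)
    have e : j + 1 + a = j + a + 1 := by omega
    simp only [e]
    linarith [h]
  have O5 : -gwP q c (a+(a+n)) - -gwP q c (a+(n+1)+(a+n))
      ≤ ∑ r ∈ Finset.Icc a (a+n), gwF q c (r+(a+n)) := by
    refine gw_le_sum _ (fun r => -gwP q c (r+(a+n))) a n (fun j hj => ?_)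
    have h := gw_L2b hq hc (j+(a+n)) (by omega)
    have e : j + 1 + (a+n) = j + (a+n) + 1 := by omega
    simp only [e]
    linarith [h]
  -- canonicalize indices
  have e1 : a+(n+1)+a = 2*a+n+1 := by omega
  have e2 : a+(a+(n+1)) = 2*a+n+1 := by omega
  have e3 : a+n+(a+(n+1)) = 2*a+2*n+1 := by omega
  have e4 : a+a = 2*a := by omega
  have e5 : a+n+a = 2*a+n := by omega
  have e6 : a+(a+n) = 2*a+n := by omega
  have e7 : a+(n+1)+(a+n) = 2*a+2*n+1 := by omega
  rw [e1, e4] at O1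
  rw [e2, e3] at O2
  rw [e4, e5] at O3
  rw [e4, e5] at O4
  rw [e6, e7] at O5
  have hL : 2*gwP q c (2*a+n+1) - gwP q c (2*a) - gwP q c (2*a+2*n+1) - gwF q c (2*a+n+1)
      ≤ ∑ r₁ ∈ Finset.Icc a (a+n), ∑ r₂ ∈ Finset.Icc a (a+n), gwg q c (r₁+r₂) := by
    linarith [hL1, O1, O2]
  have hU : (∑ r₁ ∈ Finset.Icc a (a+n), ∑ r₂ ∈ Finset.Icc a (a+n), gwg q c (r₁+r₂))
      ≤ 2*gwP q c (2*a+n) - gwP q c (2*a) - gwP q c (2*a+2*n+1)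
        + gwg q c (2*a) + 2*gwF q c (2*a) - gwF q c (2*a+n) := by
    linarith [hU1, O3, O4, O5]
  -- the constant κ/q²
  have hK : Real.log (((M:ℝ)+1)^2/(4*(M:ℝ)))/q^2
      = 2*gwP0 q (2*a+n) - gwP0 q (2*a) - gwP0 q (2*a+2*n) := by
    simp only [gwP0]; push_cast
    have hu : 0 < q*(a:ℝ) := by positivity
    have l1 : 2*(a:ℝ)+(n:ℝ) = (a:ℝ)*((M:ℝ)+1) := by nlinarith [hxy]
    have l2 : 2*(a:ℝ)+2*(n:ℝ) = (a:ℝ)*(2*(M:ℝ)) := by nlinarith [hxy]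
    rw [show q*(2*(a:ℝ)+(n:ℝ)) = (q*(a:ℝ))*((M:ℝ)+1) from by rw [l1]; ring]
    rw [show q*(2*(a:ℝ)) = 2*(q*(a:ℝ)) from by ring]
    rw [show q*(2*(a:ℝ)+2*(n:ℝ)) = (q*(a:ℝ))*(2*(M:ℝ)) from by rw [l2]; ring]
    have lm1 : Real.log ((q*(a:ℝ))*((M:ℝ)+1)) = Real.log (q*(a:ℝ)) + Real.log ((M:ℝ)+1) :=
      Real.log_mul hu.ne' (by positivity)
    have lm2 : Real.log (2*(q*(a:ℝ))) = Real.log 2 + Real.log (q*(a:ℝ)) :=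
      Real.log_mul two_ne_zero hu.ne'
    have lm3 : Real.log ((q*(a:ℝ))*(2*(M:ℝ))) = Real.log (q*(a:ℝ)) + (Real.log 2 + Real.log (M:ℝ)) := by
      rw [Real.log_mul hu.ne' (by positivity), Real.log_mul two_ne_zero hM0.ne']
    have rhs0 : Real.log (((M:ℝ)+1)^2/(4*(M:ℝ)))
        = 2*Real.log ((M:ℝ)+1) - (Real.log 4 + Real.log (M:ℝ)) := by
      rw [Real.log_div (by positivity) (by positivity), Real.log_pow,
        Real.log_mul (by norm_num) hM0.ne']
      push_cast; ring
    have log4 : Real.log 4 = 2*Real.log 2 := by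
      rw [show (4:ℝ) = 2^2 by norm_num, Real.log_pow]; push_cast; ring
    rw [rhs0, lm1, lm2, lm3, log4]
    ring
  -- error bounds
  have B1 : gwP0 q (2*a+n) ≤ gwP q c (2*a+n+1) := gw_L3a hq hc (2*a+n) 1 (by omega)
  have B2l : gwP0 q (2*a) ≤ gwP q c (2*a) := by
    have h := gw_L3a hq hc (2*a) 0 (by omega)
    simpa using h
  have B4l : gwP0 q (2*a+n) ≤ gwP q c (2*a+n) := by
    have h := gw_L3a hq hc (2*a+n) 0 (by omega)
    simpa using h
  have B3l : gwP0 q (2*a+2*n) ≤ gwP q c (2*a+2*n+1) := gw_L3a hq hc (2*a+2*n) 1 (by omega)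
  have B2 : gwP q c (2*a) - gwP0 q (2*a) ≤ c/(q^3*(2*(a:ℝ))) := by
    have h := gw_L3b hq hc (2*a) 0 (by omega)
    simp only [Nat.add_zero] at h
    push_cast at h
    have e : (q*0+c)/(q^3*(2*(a:ℝ))) = c/(q^3*(2*(a:ℝ))) := by ring
    linarith [h, e]
  have B3 : gwP q c (2*a+2*n+1) - gwP0 q (2*a+2*n) ≤ (q+c)/(q^3*(2*(a:ℝ))) := by
    have h := gw_L3b hq hc (2*a+2*n) 1 (by omega)
    push_cast at h
    have h2 : (q*1+c)/(q^3*(2*(a:ℝ)+2*(n:ℝ))) ≤ (q+c)/(q^3*(2*(a:ℝ))) := by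
      rw [div_le_div_iff₀ (by positivity) (by positivity)]
      nlinarith [mul_nonneg (mul_nonneg (add_nonneg hq.le hc) (pow_nonneg hq.le 3)) hn0]
    linarith [h, h2]
  have B4 : gwP q c (2*a+n) - gwP0 q (2*a+n) ≤ c/(q^3*(2*(a:ℝ))) := by
    have h := gw_L3b hq hc (2*a+n) 0 (by omega)
    simp only [Nat.add_zero] at h
    push_cast at h
    have h2 : (q*0+c)/(q^3*(2*(a:ℝ)+(n:ℝ))) ≤ c/(q^3*(2*(a:ℝ))) := by
      rw [show q*0+c = c from by ring, div_le_div_iff₀ (by positivity) (by positivity)]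
      nlinarith [mul_nonneg (mul_nonneg hc (pow_nonneg hq.le 3)) hn0]
    linarith [h, h2]
  have BF1 : gwF q c (2*a+n+1) ≤ 1/(q^2*(a:ℝ)) := by
    simp only [gwF]; push_cast
    apply one_div_le_one_div_of_le (by positivity)
    nlinarith [mul_nonneg (mul_nonneg hq.le hq.le) hn0, mul_nonneg hq.le hc,
      mul_pos (mul_pos hq hq) hx0, sq_nonneg q]
  have BF2 : gwF q c (2*a) ≤ 1/(2*q^2*(a:ℝ)) := by
    simp only [gwF]; push_cast
    apply one_div_le_one_div_of_le (by positivity)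
    nlinarith [mul_nonneg hq.le hc]
  have BG : gwg q c (2*a) ≤ 1/(4*q^2*(a:ℝ)) := by
    simp only [gwg]; push_cast
    apply one_div_le_one_div_of_le (by positivity)
    nlinarith [mul_nonneg (mul_nonneg (mul_nonneg (by norm_num : (0:ℝ) ≤ 4) (mul_nonneg hq.le hq.le)) hx0.le) (sub_nonneg.mpr hx1),
      mul_nonneg (mul_nonneg hq.le hx0.le) hc, sq_nonneg c]
  have BF1l : 0 ≤ gwF q c (2*a+n+1) := gw_Fnonneg hq hc _
  have BF2l : 0 ≤ gwF q c (2*a) := gw_Fnonneg hq hc _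
  have BF3l : 0 ≤ gwF q c (2*a+n) := gw_Fnonneg hq hc _
  have BGl : 0 ≤ gwg q c (2*a) := gw_gnonneg _
  -- final combination
  have hCx : ((2*(q+c)/q^3 + 2/q^2) * (M:ℝ)) / (M : ℝ)^i
      = (2*(q+c)/q^3 + 2/q^2)/(a:ℝ) := by
    rw [hMi, div_eq_div_iff (by positivity) (by positivity)]
    ring
  rw [hCx, abs_sub_le_iff]
  constructor
  · -- S - K
    have expand1 : (2*(q+c)/q^3 + 2/q^2)/(a:ℝ)
        = 2*(c/(q^3*(2*(a:ℝ)))) + 1/(4*q^2*(a:ℝ)) + 2*(1/(2*q^2*(a:ℝ)))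
          + ((2*q+c)/(q^3*(a:ℝ)) + (3/4)/(q^2*(a:ℝ))) := by
      field_simp
      ring
    have hres1 : 0 ≤ (2*q+c)/(q^3*(a:ℝ)) + (3/4)/(q^2*(a:ℝ)) := by
      apply add_nonneg <;> apply div_nonneg <;> positivity
    linarith [hU, hK, B4, BG, BF2, B2l, B3l, BF3l, expand1, hres1]
  · -- K - S
    have expand2 : (2*(q+c)/q^3 + 2/q^2)/(a:ℝ)
        = c/(q^3*(2*(a:ℝ))) + (q+c)/(q^3*(2*(a:ℝ))) + 1/(q^2*(a:ℝ))
          + ((3*q+2*c)/(2*q^3*(a:ℝ)) + 1/(q^2*(a:ℝ))) := by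
      field_simp
      ring
    have hres2 : 0 ≤ (3*q+2*c)/(2*q^3*(a:ℝ)) + 1/(q^2*(a:ℝ)) := by
      apply add_nonneg <;> apply div_nonneg <;> positivity
    linarith [hL, hK, B1, B2, B3, BF1, expand2, hres2]

/-- The slice sums governing the one-loop RG flow of the parameters `q, p` of the
Grosse–Wulkenhaar model in a magnetic field: for `M ≥ 2`, `q > 0`, `c ≥ 0`, the sums
`S_i = Σ_{r₁ = M^{i−1}}^{M^i} Σ_{r₂ = M^{i−1}}^{M^i} 1/(q(r₁ + r₂) + c)²` satisfy
`|S_i − κ/q²| ≤ C·M^{−i}` for all `i ≥ 1`, where `κ = ln((M + 1)²/(4M))` is independent of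
the slice index `i` and of `c`; in particular `S_i → κ/q²` as `i → ∞`. -/
theorem gw_slice_sum (M : ℕ) (hM : 2 ≤ M) (q c : ℝ) (hq : 0 < q) (hc : 0 ≤ c) :
    (∃ C > (0 : ℝ), ∀ i : ℕ, 1 ≤ i →
      |(∑ r₁ ∈ Finset.Icc (M ^ (i - 1)) (M ^ i), ∑ r₂ ∈ Finset.Icc (M ^ (i - 1)) (M ^ i),
            (1 : ℝ) / (q * ((r₁ : ℝ) + (r₂ : ℝ)) + c) ^ 2)
          - Real.log (((M : ℝ) + 1) ^ 2 / (4 * (M : ℝ))) / q ^ 2| ≤ C / (M : ℝ) ^ i)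
    ∧ Filter.Tendsto
        (fun i : ℕ =>
          ∑ r₁ ∈ Finset.Icc (M ^ (i - 1)) (M ^ i), ∑ r₂ ∈ Finset.Icc (M ^ (i - 1)) (M ^ i),
            (1 : ℝ) / (q * ((r₁ : ℝ) + (r₂ : ℝ)) + c) ^ 2)
        Filter.atTop
        (nhds (Real.log (((M : ℝ) + 1) ^ 2 / (4 * (M : ℝ))) / q ^ 2)) := by
  have hM0 : (0:ℝ) < (M:ℝ) := by positivity
  have hCpos : (0:ℝ) < (2*(q+c)/q^3 + 2/q^2) * (M:ℝ) := by
    have h1 : (0:ℝ) ≤ 2*(q+c)/q^3 := by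
      apply div_nonneg _ (by positivity)
      nlinarith
    have h2 : (0:ℝ) < 2/q^2 := by positivity
    nlinarith
  refine ⟨⟨(2*(q+c)/q^3 + 2/q^2) * (M:ℝ), hCpos, fun i hi => gw_key M hM q c hq hc i hi⟩, ?_⟩
  have hM1 : (1:ℝ) < (M:ℝ) := by
    have : (1:ℕ) < M := by omega
    exact_mod_cast this
  have h0 : Filter.Tendsto (fun i : ℕ => ((2*(q+c)/q^3 + 2/q^2) * (M:ℝ)) / (M:ℝ)^i)
      Filter.atTop (nhds 0) :=
    Filter.Tendsto.div_atTop tendsto_const_nhds (tendsto_pow_atTop_atTop_of_one_lt hM1)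
  have hev : ∀ᶠ i : ℕ in Filter.atTop,
      ‖(∑ r₁ ∈ Finset.Icc (M ^ (i - 1)) (M ^ i), ∑ r₂ ∈ Finset.Icc (M ^ (i - 1)) (M ^ i),
            (1 : ℝ) / (q * ((r₁ : ℝ) + (r₂ : ℝ)) + c) ^ 2)
          - Real.log (((M : ℝ) + 1) ^ 2 / (4 * (M : ℝ))) / q ^ 2‖
        ≤ ((2*(q+c)/q^3 + 2/q^2) * (M:ℝ)) / (M:ℝ)^i := by
    filter_upwards [Filter.eventually_ge_atTop 1] with i hi
    rw [Real.norm_eq_abs]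
    exact gw_key M hM q c hq hc i hi
  have h1 := squeeze_zero_norm' hev h0
  have h2 := h1.add_const (Real.log (((M : ℝ) + 1) ^ 2 / (4 * (M : ℝ))) / q ^ 2)
  simpa using h2
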